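/- arXiv:1505.02619 — 2 statements merged into one kernel-verified Lean document; each statement's English description precedes it below -/
import Mathlib

section
/- Let x_1, x_2, x_3, x_4 be vertices of four pairwise distinct receiver states over N such that x_j ∩ x_l ≠ ∅ for every pair j ≠ l (i.e., all pairs satisfy BC1). Then for every p ∈ x_1 ∩ x_2 and every q ∈ x_3 ∩ x_4, the packet combination {p, q} benefits all four vertices. In particular, considering condition BC1 only, proper 4-cliques are guaranteed (second statement of Theorem 1). -/
/-- A receiver state over a finite set `N` of packets: a Has set `H ⊆ N` together with
a family `V` of nonempty, pairwise disjoint packet sets (the vertices) whose union is `N \ H`. -/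
structure ReceiverState (N : Finset ℕ) where
  H : Finset ℕ
  V : Finset (Finset ℕ)
  has_subset : H ⊆ N
  vertex_nonempty : ∀ x ∈ V, x.Nonempty
  vertex_disjoint : ∀ x ∈ V, ∀ y ∈ V, x ≠ y → Disjoint x y
  vertex_union : V.sup id = N \ H

/-- `P` is instantly decodable for vertex `x` of receiver state `R`. -/
def InstantlyDecodable {N : Finset ℕ} (R : ReceiverState N) (x P : Finset ℕ) : Prop :=
  P ⊆ x ∪ R.H ∧ (P ∩ x).Nonempty

/-- `P` is aggregating for vertex `x` of receiver state `R`. -/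
def Aggregating {N : Finset ℕ} (R : ReceiverState N) (x P : Finset ℕ) : Prop :=
  ∃ y ∈ R.V, y ≠ x ∧ P ⊆ x ∪ y ∪ R.H ∧ (P ∩ x).Nonempty ∧ (P ∩ y).Nonempty

/-- `P` benefits vertex `x` of receiver state `R`. -/
def Benefits {N : Finset ℕ} (R : ReceiverState N) (x P : Finset ℕ) : Prop :=
  InstantlyDecodable R x P ∨ Aggregating R x P

/-- Condition BC1 between vertices `x` and `y` of two different receiver states. -/
def BC1 (x y : Finset ℕ) : Prop := (x ∩ y).Nonempty

/-- Condition BC2 between vertex `x` of `Ri` and vertex `y` of `Rk`. -/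
def BC2 {N : Finset ℕ} (Ri Rk : ReceiverState N) (x y : Finset ℕ) : Prop :=
  x ∩ y = ∅ ∧ (x ∩ Rk.H).Nonempty ∧ (y ∩ Ri.H).Nonempty

lemma benefits_pair {N : Finset ℕ} (R : ReceiverState N) (x : Finset ℕ)
    (hx : x ∈ R.V) {a b : ℕ} (ha : a ∈ x) (hb : b ∈ N) :
    Benefits R x {a, b} := by
  have hPx : (({a, b} : Finset ℕ) ∩ x).Nonempty :=
    ⟨a, Finset.mem_inter.2 ⟨by simp, ha⟩⟩
  have hsub : ∀ S : Finset ℕ, a ∈ S → b ∈ S → ({a, b} : Finset ℕ) ⊆ S := by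
    intro S haS hbS z hz
    rcases Finset.mem_insert.1 hz with rfl | hz
    · exact haS
    · simp only [Finset.mem_singleton] at hz; subst hz; exact hbS
  by_cases hbH : b ∈ R.H
  · exact Or.inl ⟨hsub _ (Finset.mem_union_left _ ha) (Finset.mem_union_right _ hbH), hPx⟩
  · have hbN : b ∈ N \ R.H := Finset.mem_sdiff.2 ⟨hb, hbH⟩
    rw [← R.vertex_union] at hbN
    obtain ⟨y, hy, hby⟩ := Finset.mem_sup.1 hbN
    simp only [id] at hby
    by_cases hyx : y = x
    · subst hyx
      exact Or.inl ⟨hsub _ (Finset.mem_union_left _ ha) (Finset.mem_union_left _ hby), hPx⟩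
    · exact Or.inr ⟨y, hy, hyx,
        hsub _ (Finset.mem_union_left _ (Finset.mem_union_left _ ha))
          (Finset.mem_union_left _ (Finset.mem_union_right _ hby)),
        hPx, ⟨b, Finset.mem_inter.2 ⟨by simp, hby⟩⟩⟩

lemma mem_N_of_mem_vertex {N : Finset ℕ} (R : ReceiverState N) {x : Finset ℕ}
    (hx : x ∈ R.V) {a : ℕ} (ha : a ∈ x) : a ∈ N := by
  have : a ∈ R.V.sup id := Finset.mem_sup.2 ⟨x, hx, ha⟩
  rw [R.vertex_union] at this
  exact (Finset.mem_sdiff.1 this).1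

/-- Second statement of Theorem 1 (positive part): if four vertices of pairwise distinct
receiver states pairwise satisfy BC1, then for every `p ∈ x1 ∩ x2` and `q ∈ x3 ∩ x4`
the combination `{p, q}` benefits all four vertices, so proper 4-cliques are guaranteed. -/
theorem stmt5 {N : Finset ℕ} (R1 R2 R3 R4 : ReceiverState N)
    (h12 : R1 ≠ R2) (h13 : R1 ≠ R3) (h14 : R1 ≠ R4)
    (h23 : R2 ≠ R3) (h24 : R2 ≠ R4) (h34 : R3 ≠ R4)
    (x1 x2 x3 x4 : Finset ℕ)
    (hx1 : x1 ∈ R1.V) (hx2 : x2 ∈ R2.V) (hx3 : x3 ∈ R3.V) (hx4 : x4 ∈ R4.V)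
    (hb12 : (x1 ∩ x2).Nonempty) (hb13 : (x1 ∩ x3).Nonempty) (hb14 : (x1 ∩ x4).Nonempty)
    (hb23 : (x2 ∩ x3).Nonempty) (hb24 : (x2 ∩ x4).Nonempty) (hb34 : (x3 ∩ x4).Nonempty) :
    ∀ p ∈ x1 ∩ x2, ∀ q ∈ x3 ∩ x4,
      Benefits R1 x1 {p, q} ∧ Benefits R2 x2 {p, q} ∧
      Benefits R3 x3 {p, q} ∧ Benefits R4 x4 {p, q} := by
  intro p hp q hq
  rw [Finset.mem_inter] at hp hq
  have hpN : p ∈ N := mem_N_of_mem_vertex R1 hx1 hp.1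
  have hqN : q ∈ N := mem_N_of_mem_vertex R3 hx3 hq.1
  refine ⟨benefits_pair R1 x1 hx1 hp.1 hqN, benefits_pair R2 x2 hx2 hp.2 hqN, ?_, ?_⟩
  · rw [Finset.pair_comm]; exact benefits_pair R3 x3 hx3 hq.1 hpN
  · rw [Finset.pair_comm]; exact benefits_pair R4 x4 hx4 hq.2 hpN
end

section
/- There exist a finite set N of packets, four receiver states (H_1, V_1), …, (H_4, V_4) over N, and vertices x_j ∈ V_j for j = 1, …, 4 such that every pair of these vertices satisfies BC2, yet no packet combination P ⊆ N benefits all four vertices simultaneously. Hence condition BC2 cannot guarantee proper cliques of size greater than 3. -/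
/- Auxiliary construction: N consists of packets a_{jl} = 4j+l for j ≠ l, j,l < 4. -/
def myN : Finset ℕ := {1,2,3,4,6,7,8,9,11,12,13,14}

def myR0 : ReceiverState myN where
  H := {4,8,12}
  V := {{1,2,3},{6},{7},{9},{11},{13},{14}}
  has_subset := by decide
  vertex_nonempty := by decide
  vertex_disjoint := by decide
  vertex_union := by decide

def myR1 : ReceiverState myN where
  H := {1,9,13}
  V := {{4,6,7},{2},{3},{8},{11},{12},{14}}
  has_subset := by decide
  vertex_nonempty := by decide
  vertex_disjoint := by decide
  vertex_union := by decide

def myR2 : ReceiverState myN where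
  H := {2,6,14}
  V := {{8,9,11},{1},{3},{4},{7},{12},{13}}
  has_subset := by decide
  vertex_nonempty := by decide
  vertex_disjoint := by decide
  vertex_union := by decide

def myR3 : ReceiverState myN where
  H := {3,7,11}
  V := {{12,13,14},{1},{2},{4},{6},{8},{9}}
  has_subset := by decide
  vertex_nonempty := by decide
  vertex_disjoint := by decide
  vertex_union := by decide

def myR : Fin 4 → ReceiverState myN := ![myR0, myR1, myR2, myR3]

def myx : Fin 4 → Finset ℕ := ![{1,2,3}, {4,6,7}, {8,9,11}, {12,13,14}]

instance {N : Finset ℕ} (R : ReceiverState N) (x P : Finset ℕ) :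
    Decidable (InstantlyDecodable R x P) := by unfold InstantlyDecodable; infer_instance

instance {N : Finset ℕ} (R : ReceiverState N) (x P : Finset ℕ) :
    Decidable (Aggregating R x P) := by unfold Aggregating; infer_instance

instance {N : Finset ℕ} (R : ReceiverState N) (x P : Finset ℕ) :
    Decidable (Benefits R x P) := by unfold Benefits; infer_instance

lemma key : ∀ P : Finset ℕ, ¬ ∀ j, Benefits (myR j) (myx j) P := by
  intro P hB
  have hx : ∀ j, (P ∩ myx j).Nonempty := by
    intro j
    rcases hB j with ⟨-, h⟩ | ⟨y, -, -, -, h, -⟩ <;> exact h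
  have uniq : ∀ j, ∀ e ∈ P, ∀ e' ∈ P,
      e ∉ myx j ∪ (myR j).H → e' ∉ myx j ∪ (myR j).H → e = e' := by
    intro j e he e' he' hne hne'
    rcases hB j with ⟨hsub, -⟩ | ⟨y, hy, -, hsub, -, -⟩
    · exact absurd (hsub he) hne
    · have hey : e ∈ y := by
        have h1 := hsub he
        simp only [Finset.mem_union] at h1 hne
        tauto
      have he'y : e' ∈ y := by
        have h1 := hsub he'
        simp only [Finset.mem_union] at h1 hne'
        tauto
      fin_cases j <;>
        simp only [myR, myR0, myR1, myR2, myR3, Matrix.cons_val_zero, Matrix.cons_val_one,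
          Matrix.head_cons] at hy <;>
        fin_cases hy <;>
        first
          | (fin_cases hey <;> exact absurd (by decide) hne)
          | simp_all
  obtain ⟨e0, h0⟩ := hx 0
  obtain ⟨hp0, m0⟩ := Finset.mem_inter.mp h0
  obtain ⟨e1, h1⟩ := hx 1
  obtain ⟨hp1, m1⟩ := Finset.mem_inter.mp h1
  obtain ⟨e2, h2⟩ := hx 2
  obtain ⟨hp2, m2⟩ := Finset.mem_inter.mp h2
  obtain ⟨e3, h3⟩ := hx 3
  obtain ⟨hp3, m3⟩ := Finset.mem_inter.mp h3
  simp only [myx, Matrix.cons_val_zero, Matrix.cons_val_one, Matrix.head_cons] at m0 m1 m2 m3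
  fin_cases m0
  · fin_cases m1
    · exact absurd (uniq 2 _ hp0 _ hp1 (by decide) (by decide)) (by decide)
    · exact absurd (uniq 3 _ hp0 _ hp1 (by decide) (by decide)) (by decide)
    · exact absurd (uniq 2 _ hp0 _ hp1 (by decide) (by decide)) (by decide)
  · fin_cases m2
    · exact absurd (uniq 1 _ hp0 _ hp2 (by decide) (by decide)) (by decide)
    · exact absurd (uniq 3 _ hp0 _ hp2 (by decide) (by decide)) (by decide)
    · exact absurd (uniq 1 _ hp0 _ hp2 (by decide) (by decide)) (by decide)
  · fin_cases m3
    · exact absurd (uniq 1 _ hp0 _ hp3 (by decide) (by decide)) (by decide)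
    · exact absurd (uniq 2 _ hp0 _ hp3 (by decide) (by decide)) (by decide)
    · exact absurd (uniq 1 _ hp0 _ hp3 (by decide) (by decide)) (by decide)

/-- There exist four receiver states and vertices, every pair of which satisfies BC2,
such that no packet combination benefits all four simultaneously. -/
theorem stmt7 : ∃ (N : Finset ℕ) (R : Fin 4 → ReceiverState N) (x : Fin 4 → Finset ℕ),
    (∀ j l, j ≠ l → R j ≠ R l) ∧
    (∀ j, x j ∈ (R j).V) ∧
    (∀ j l, j ≠ l → BC2 (R j) (R l) (x j) (x l)) ∧
    (∀ P : Finset ℕ, P ⊆ N → P.Nonempty → ¬ ∀ j, Benefits (R j) (x j) P) := by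
  refine ⟨myN, myR, myx, ?_, ?_, ?_, ?_⟩
  · intro j l h hR
    apply h
    have hH := congrArg ReceiverState.H hR
    fin_cases j <;> fin_cases l <;> simp_all [myR, myR0, myR1, myR2, myR3] <;>
      exact absurd hR.1 (by decide)
  · intro j; fin_cases j <;> decide
  · intro j l h
    unfold BC2
    fin_cases j <;> fin_cases l <;> first | exact absurd rfl h | decide
  · intro P hP hne
    exact key P
end
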